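/- Let n ≥ 1, let k : Fin n → ℂ, let A_k be the multiplication operator on EuclideanSpace ℂ (Fin n) defined by (A_k x) p = (k p) · (x p), let Ω = {p : Fin n | ‖1 - k p‖ < 1} be nonempty with t = max_{p ∈ Ω} ‖1 - k p‖, and let P be the coordinate projection onto Ω. Let i* ∈ EuclideanSpace ℂ (Fin n), J* = A_k(i*), and let (Xⁿ) be the reverse-filtering iteration X⁰ = J*, X^{n+1} = Xⁿ + J* - A_k(Xⁿ). Then the error of the Ω-component decays geometrically: for every n ≥ 0, ‖P(Xⁿ) - P(i*)‖ ≤ tⁿ·‖P(J*) - P(i*)‖. -/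

import Mathlib

/-- The multiplication (Fourier-multiplier) operator with multiplier `k`. -/
def mulOp (n : ℕ) (k : Fin n → ℂ) (x : EuclideanSpace ℂ (Fin n)) :
    EuclideanSpace ℂ (Fin n) :=
  WithLp.toLp 2 (fun p => k p * x p)

/-- The coordinate projection onto a subset `Ω` of `Fin n`. -/
def projSet (n : ℕ) (Ω : Finset (Fin n)) (x : EuclideanSpace ℂ (Fin n)) :
    EuclideanSpace ℂ (Fin n) :=
  WithLp.toLp 2 (fun p => if p ∈ Ω then x p else 0)

/-- The `Ω`-component of the reverse-filtering iteration error decays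
geometrically: `‖P Xⁿ - P i*‖ ≤ tⁿ·‖P J* - P i*‖` with
`t = max_{p ∈ Ω} ‖1 - k p‖`. -/
theorem multiplier_operator_projected_error_geometric_decay
    (n : ℕ) (hn : 0 < n) (k : Fin n → ℂ)
    (Ω : Finset (Fin n)) (hΩdef : Ω = Finset.univ.filter (fun p => ‖(1 : ℂ) - k p‖ < 1))
    (hΩ : Ω.Nonempty)
    (istar Jstar : EuclideanSpace ℂ (Fin n)) (hJ : Jstar = mulOp n k istar)
    (X : ℕ → EuclideanSpace ℂ (Fin n)) (hX0 : X 0 = Jstar)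
    (hX : ∀ m : ℕ, X (m + 1) = X m + Jstar - mulOp n k (X m)) :
    ∀ m : ℕ,
      ‖projSet n Ω (X m) - projSet n Ω istar‖ ≤
        (Ω.sup' hΩ (fun p => ‖(1 : ℂ) - k p‖)) ^ m *
          ‖projSet n Ω Jstar - projSet n Ω istar‖ := by
  set t := Ω.sup' hΩ (fun p => ‖(1 : ℂ) - k p‖) with htdef
  have ht0 : 0 ≤ t := le_trans (norm_nonneg ((1 : ℂ) - k hΩ.choose))
    (Finset.le_sup' (fun p => ‖(1 : ℂ) - k p‖) hΩ.choose_spec)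
  have hcoord : ∀ m : ℕ, ∀ p, X m p - istar p = (1 - k p) ^ m * (Jstar p - istar p) := by
    intro m
    induction m with
    | zero => intro p; simp [hX0]
    | succ m ih =>
      intro p
      have h1 : X (m + 1) p = X m p + Jstar p - k p * X m p := by
        rw [hX m]; rfl
      have hJp : Jstar p = k p * istar p := by rw [hJ]; rfl
      have : X (m + 1) p - istar p
          = (1 - k p) * (X m p - istar p) + (Jstar p - k p * istar p) := by
        rw [h1]; ring
      rw [this, ← hJp, sub_self, add_zero, ih p, pow_succ]
      ring
  intro m
  have hsub : ∀ (a b : EuclideanSpace ℂ (Fin n)) (p : Fin n),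
      (projSet n Ω a - projSet n Ω b) p
        = if p ∈ Ω then a p - b p else 0 := by
    intro a b p
    have : (projSet n Ω a - projSet n Ω b) p = projSet n Ω a p - projSet n Ω b p := rfl
    rw [this]
    unfold projSet
    split <;> rename_i hq <;> simp [hq]
  rw [EuclideanSpace.norm_eq, EuclideanSpace.norm_eq]
  have hterm : ∀ p : Fin n,
      ‖(projSet n Ω (X m) - projSet n Ω istar) p‖ ^ 2
        ≤ (t ^ m) ^ 2 * ‖(projSet n Ω Jstar - projSet n Ω istar) p‖ ^ 2 := by
    intro p
    rw [hsub, hsub]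
    by_cases hp : p ∈ Ω
    · simp only [hp, if_true]
      rw [hcoord m p, norm_mul, norm_pow, mul_pow]
      have hle : ‖(1 : ℂ) - k p‖ ≤ t := Finset.le_sup' (fun p => ‖(1 : ℂ) - k p‖) hp
      gcongr
    · simp [hp]
  calc Real.sqrt (∑ p, ‖(projSet n Ω (X m) - projSet n Ω istar) p‖ ^ 2)
      ≤ Real.sqrt (∑ p, (t ^ m) ^ 2 * ‖(projSet n Ω Jstar - projSet n Ω istar) p‖ ^ 2) := by
        apply Real.sqrt_le_sqrt
        exact Finset.sum_le_sum fun p _ => hterm p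
    _ = t ^ m * Real.sqrt (∑ p, ‖(projSet n Ω Jstar - projSet n Ω istar) p‖ ^ 2) := by
        rw [← Finset.mul_sum, Real.sqrt_mul (by positivity), Real.sqrt_sq (by positivity)]
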